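/- Let m ≥ 1, let b be an m×m real matrix, and let c : Fin m → Fin m → Fin m → Fin m → ℝ satisfy c_{ijls} = −c_{jils} and c_{ijls} = c_{lsij} for all indices. For r with r·1 − b invertible define C(r)_{ijkm} = ∑_{l,s} ρ(r)_{l k} · ρ(r)_{s m} · c_{i j l s}, where ρ(r) = (r·1 − b)⁻¹. Suppose that for all sufficiently large r and all i, j, k, m: C(r)_{ijkm} + C(r)_{ikmj} + C(r)_{imjk} = 0 (the cyclic identity over the last three indices). Then: (i) c_{ijkl} + c_{iklj} + c_{iljk} = 0 for all indices; and (ii) ∑_s ( c_{isjk}·b_{sm} + c_{iskm}·b_{sj} + c_{ismj}·b_{sk} ) = 0 for all i, j, k, m. -/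

import Mathlib

open Matrix Filter Topology

/-- **Constraints from the cyclic Weyl identity.**
Let `C(r)_{ijkm} = ∑_{l,s} ρ(r)_{lk} ρ(r)_{sm} c_{ijls}` with `ρ(r) = (r·1 - b)⁻¹`.
If the cyclic identity `C_{ijkm} + C_{ikmj} + C_{imjk} = 0` holds for all sufficiently
large `r`, then `c_{i{jkl}} = 0` and `∑_s (c_{isjk} b_{sm} + c_{iskm} b_{sj} + c_{ismj} b_{sk}) = 0`. -/
theorem cyclic_identity_constraints
    (m : ℕ) (hm : 1 ≤ m) (b : Matrix (Fin m) (Fin m) ℝ)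
    (c : Fin m → Fin m → Fin m → Fin m → ℝ)
    (hanti : ∀ i j l s, c i j l s = -c j i l s)
    (hpair : ∀ i j l s, c i j l s = c l s i j)
    (hcyc : ∃ R : ℝ, ∀ r : ℝ, R ≤ r →
      IsUnit (r • (1 : Matrix (Fin m) (Fin m) ℝ) - b) ∧
      ∀ i j k l,
        (∑ p, ∑ s, (r • (1 : Matrix (Fin m) (Fin m) ℝ) - b)⁻¹ p k
            * (r • (1 : Matrix (Fin m) (Fin m) ℝ) - b)⁻¹ s l * c i j p s)
        + (∑ p, ∑ s, (r • (1 : Matrix (Fin m) (Fin m) ℝ) - b)⁻¹ p l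
            * (r • (1 : Matrix (Fin m) (Fin m) ℝ) - b)⁻¹ s j * c i k p s)
        + (∑ p, ∑ s, (r • (1 : Matrix (Fin m) (Fin m) ℝ) - b)⁻¹ p j
            * (r • (1 : Matrix (Fin m) (Fin m) ℝ) - b)⁻¹ s k * c i l p s) = 0) :
    (∀ i j k l, c i j k l + c i k l j + c i l j k = 0) ∧
    (∀ i j k l, ∑ s, (c i s j k * b s l + c i s k l * b s j + c i s l j * b s k) = 0) := by
    classical
  obtain ⟨R, hR⟩ := hcyc
  set X : ℝ → Matrix (Fin m) (Fin m) ℝ :=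
    fun r => (r • (1 : Matrix (Fin m) (Fin m) ℝ) - b)⁻¹ with hXdef
  set Z : ℝ → Matrix (Fin m) (Fin m) ℝ :=
    fun r => ((1 : Matrix (Fin m) (Fin m) ℝ) - r⁻¹ • b)⁻¹ with hZdef
  -- entrywise limit of Z at infinity
  have hZlim : ∀ p q, Tendsto (fun r => Z r p q) atTop
      (𝓝 ((1 : Matrix (Fin m) (Fin m) ℝ) p q)) := by
    intro p q
    have hcont : Continuous fun t : ℝ => (1 : Matrix (Fin m) (Fin m) ℝ) - t • b :=
      continuous_const.sub (continuous_id.smul continuous_const)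
    have key : ∀ t : ℝ, ((1 : Matrix (Fin m) (Fin m) ℝ) - t • b)⁻¹ p q
        = (((1 : Matrix (Fin m) (Fin m) ℝ) - t • b).det)⁻¹ *
          ((1 : Matrix (Fin m) (Fin m) ℝ) - t • b).adjugate p q := by
      intro t
      rw [Matrix.inv_def, Ring.inverse_eq_inv']
      simp [Matrix.smul_apply]
    have hdt : Tendsto (fun r : ℝ => ((1 : Matrix (Fin m) (Fin m) ℝ) - r⁻¹ • b).det)
        atTop (𝓝 1) := by
      have h := (hcont.matrix_det.tendsto 0).comp tendsto_inv_atTop_zero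
      simpa [Function.comp_def] using h
    have hinv : Tendsto (fun r : ℝ => (((1 : Matrix (Fin m) (Fin m) ℝ) - r⁻¹ • b).det)⁻¹)
        atTop (𝓝 1) := by
      simpa using hdt.inv₀ one_ne_zero
    have hadj : Tendsto (fun r : ℝ => ((1 : Matrix (Fin m) (Fin m) ℝ) - r⁻¹ • b).adjugate p q)
        atTop (𝓝 ((1 : Matrix (Fin m) (Fin m) ℝ) p q)) := by
      have hc2 : Continuous fun t : ℝ =>
          ((1 : Matrix (Fin m) (Fin m) ℝ) - t • b).adjugate p q :=
        (continuous_apply q).comp ((continuous_apply p).comp hcont.matrix_adjugate)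
      have h := (hc2.tendsto 0).comp tendsto_inv_atTop_zero
      simpa [Matrix.adjugate_one, Function.comp_def] using h
    have := hinv.mul hadj
    rw [one_mul] at this
    exact this.congr (fun r => (key r⁻¹).symm)
  -- entrywise limit of b * Z
  have hbZlim : ∀ p q, Tendsto (fun r => (b * Z r) p q) atTop (𝓝 (b p q)) := by
    intro p q
    have h1 : Tendsto (fun r => ∑ t, b p t * Z r t q) atTop
        (𝓝 (∑ t, b p t * (1 : Matrix (Fin m) (Fin m) ℝ) t q)) :=
      tendsto_finset_sum _ (fun t _ => (hZlim t q).const_mul _)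
    have h2 : (∑ t, b p t * (1 : Matrix (Fin m) (Fin m) ℝ) t q) = b p q := by
      simp [Matrix.one_apply, mul_ite]
    rw [← h2]
    exact h1.congr (fun r => (Matrix.mul_apply).symm)
  -- eventual algebraic facts
  have hev : ∀ᶠ r : ℝ in atTop,
      (∀ p q, Z r p q = r * X r p q) ∧
      (∀ p q, (b * Z r) p q = r * (Z r p q - (1 : Matrix (Fin m) (Fin m) ℝ) p q)) ∧
      (∀ i j k l,
        (∑ p, ∑ s, X r p k * X r s l * c i j p s)
        + (∑ p, ∑ s, X r p l * X r s j * c i k p s)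
        + (∑ p, ∑ s, X r p j * X r s k * c i l p s) = 0) := by
    filter_upwards [eventually_ge_atTop R, eventually_ge_atTop (1:ℝ)] with r hrR hr1
    have hr0 : r ≠ 0 := by linarith
    obtain ⟨hu, hc⟩ := hR r hrR
    have hdet : IsUnit (r • (1 : Matrix (Fin m) (Fin m) ℝ) - b).det :=
      (Matrix.isUnit_iff_isUnit_det _).mp hu
    have e0 : r • X r - b * X r = 1 := by
      have h := Matrix.mul_nonsing_inv _ hdet
      calc r • X r - b * X r = (r • (1 : Matrix (Fin m) (Fin m) ℝ) - b) * X r := by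
            rw [Matrix.sub_mul, Matrix.smul_mul, Matrix.one_mul]
        _ = 1 := h
    have e1 : Z r = r • X r := by
      apply Matrix.inv_eq_right_inv
      have : ((1 : Matrix (Fin m) (Fin m) ℝ) - r⁻¹ • b) * (r • X r)
          = r • X r - b * X r := by
        rw [Matrix.sub_mul, Matrix.one_mul, Matrix.smul_mul, mul_smul_comm, smul_smul,
          inv_mul_cancel₀ hr0, one_smul]
      rw [this, e0]
    have e2 : b * Z r = r • (Z r - 1) := by
      have hbX : b * X r = r • X r - 1 := by rw [← e0]; abel
      rw [e1, mul_smul_comm, hbX, ← e1]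
    refine ⟨?_, ?_, hc⟩
    · intro p q; rw [e1]; simp [Matrix.smul_apply]
    · intro p q; rw [e2]; simp [Matrix.smul_apply, Matrix.sub_apply, mul_sub]
  -- helper: limits of the double sums
  have hs1 : ∀ (a e : Fin m) (d : Fin m → Fin m → ℝ),
      Tendsto (fun r => ∑ p, ∑ s, Z r p a * Z r s e * d p s) atTop
        (𝓝 (∑ p, ∑ s, (1 : Matrix (Fin m) (Fin m) ℝ) p a
            * (1 : Matrix (Fin m) (Fin m) ℝ) s e * d p s)) := by
    intro a e d
    refine tendsto_finset_sum _ fun p _ => tendsto_finset_sum _ fun s _ => ?_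
    exact ((hZlim p a).mul (hZlim s e)).mul_const _
  have hs2 : ∀ (a e : Fin m) (d : Fin m → Fin m → ℝ),
      Tendsto (fun r => ∑ p, ∑ s,
          ((b * Z r) p a * Z r s e + (1 : Matrix (Fin m) (Fin m) ℝ) p a * (b * Z r) s e)
            * d p s) atTop
        (𝓝 (∑ p, ∑ s, (b p a * (1 : Matrix (Fin m) (Fin m) ℝ) s e
            + (1 : Matrix (Fin m) (Fin m) ℝ) p a * b s e) * d p s)) := by
    intro a e d
    refine tendsto_finset_sum _ fun p _ => tendsto_finset_sum _ fun s _ => ?_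
    exact (((hbZlim p a).mul (hZlim s e)).add
      (tendsto_const_nhds.mul (hbZlim s e))).mul_const _
  -- evaluation of the limit sums
  have hval : ∀ (a e : Fin m) (d : Fin m → Fin m → ℝ),
      (∑ p, ∑ s, (1 : Matrix (Fin m) (Fin m) ℝ) p a
        * (1 : Matrix (Fin m) (Fin m) ℝ) s e * d p s) = d a e := by
    intro a e d
    simp [Matrix.one_apply, ite_mul, mul_ite]
  have hval2 : ∀ (a e : Fin m) (d : Fin m → Fin m → ℝ),
      (∑ p, ∑ s, (b p a * (1 : Matrix (Fin m) (Fin m) ℝ) s e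
        + (1 : Matrix (Fin m) (Fin m) ℝ) p a * b s e) * d p s)
      = (∑ p, b p a * d p e) + (∑ s, b s e * d a s) := by
    intro a e d
    simp only [add_mul, Finset.sum_add_distrib]
    congr 1
    · rw [Finset.sum_comm]
      simp [Matrix.one_apply, ite_mul, mul_ite, mul_assoc]
    · simp [Matrix.one_apply, ite_mul, mul_ite]
  -- Part (i)
  have part1 : ∀ i j k l, c i j k l + c i k l j + c i l j k = 0 := by
    intro i j k l
    have hG0 : ∀ᶠ r : ℝ in atTop,
        (∑ p, ∑ s, Z r p k * Z r s l * c i j p s)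
        + (∑ p, ∑ s, Z r p l * Z r s j * c i k p s)
        + (∑ p, ∑ s, Z r p j * Z r s k * c i l p s) = 0 := by
      filter_upwards [hev] with r hr
      obtain ⟨h1, _, h3⟩ := hr
      have e : ∀ (a e' : Fin m) (d : Fin m → Fin m → ℝ),
          (∑ p, ∑ s, Z r p a * Z r s e' * d p s)
          = r^2 * (∑ p, ∑ s, X r p a * X r s e' * d p s) := by
        intro a e' d
        rw [Finset.mul_sum]
        refine Finset.sum_congr rfl fun p _ => ?_
        rw [Finset.mul_sum]
        refine Finset.sum_congr rfl fun s _ => ?_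
        rw [h1, h1]; ring
      rw [e, e, e, ← mul_add, ← mul_add, h3 i j k l, mul_zero]
    have hlim := ((hs1 k l fun p s => c i j p s).add (hs1 l j fun p s => c i k p s)).add
      (hs1 j k fun p s => c i l p s)
    have h0 := tendsto_nhds_unique hlim
      (Tendsto.congr' (by filter_upwards [hG0] with r h; exact h.symm) tendsto_const_nhds)
    rw [hval, hval, hval] at h0
    exact h0
  refine ⟨part1, ?_⟩
  intro i j k l
  -- Part (ii)
  have hH0 : ∀ᶠ r : ℝ in atTop,
      (∑ p, ∑ s, ((b * Z r) p k * Z r s l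
          + (1 : Matrix (Fin m) (Fin m) ℝ) p k * (b * Z r) s l) * c i j p s)
      + (∑ p, ∑ s, ((b * Z r) p l * Z r s j
          + (1 : Matrix (Fin m) (Fin m) ℝ) p l * (b * Z r) s j) * c i k p s)
      + (∑ p, ∑ s, ((b * Z r) p j * Z r s k
          + (1 : Matrix (Fin m) (Fin m) ℝ) p j * (b * Z r) s k) * c i l p s) = 0 := by
    filter_upwards [hev] with r hr
    obtain ⟨h1, h2, h3⟩ := hr
    have e : ∀ (a e' : Fin m) (d : Fin m → Fin m → ℝ),
        (∑ p, ∑ s, ((b * Z r) p a * Z r s e'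
            + (1 : Matrix (Fin m) (Fin m) ℝ) p a * (b * Z r) s e') * d p s)
        = r * ((∑ p, ∑ s, Z r p a * Z r s e' * d p s) - d a e') := by
      intro a e' d
      rw [← hval a e' d, ← Finset.sum_sub_distrib, Finset.mul_sum]
      refine Finset.sum_congr rfl fun p _ => ?_
      rw [← Finset.sum_sub_distrib, Finset.mul_sum]
      refine Finset.sum_congr rfl fun s _ => ?_
      rw [h2, h2]; ring
    have eG : ∀ (a e' : Fin m) (d : Fin m → Fin m → ℝ),
        (∑ p, ∑ s, Z r p a * Z r s e' * d p s)
        = r^2 * (∑ p, ∑ s, X r p a * X r s e' * d p s) := by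
      intro a e' d
      rw [Finset.mul_sum]
      refine Finset.sum_congr rfl fun p _ => ?_
      rw [Finset.mul_sum]
      refine Finset.sum_congr rfl fun s _ => ?_
      rw [h1, h1]; ring
    have hGr : (∑ p, ∑ s, Z r p k * Z r s l * c i j p s)
        + (∑ p, ∑ s, Z r p l * Z r s j * c i k p s)
        + (∑ p, ∑ s, Z r p j * Z r s k * c i l p s) = 0 := by
      rw [eG, eG, eG, ← mul_add, ← mul_add, h3 i j k l, mul_zero]
    rw [e, e, e]
    have hP := part1 i j k l
    linear_combination r * hGr - r * hP
  have hHlim := ((hs2 k l fun p s => c i j p s).add (hs2 l j fun p s => c i k p s)).add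
    (hs2 j k fun p s => c i l p s)
  have hL := tendsto_nhds_unique hHlim
    (Tendsto.congr' (by filter_upwards [hH0] with r h; exact h.symm) tendsto_const_nhds)
  rw [hval2, hval2, hval2] at hL
  have hsum : ∑ x, (c i x j k * b x l + c i x k l * b x j + c i x l j * b x k
      + (b x l * c i j k x + b x l * c i k x j + b x j * c i k l x + b x j * c i l x k
        + b x k * c i j x l + b x k * c i l j x)) = 0 :=
    Finset.sum_eq_zero fun x _ => by
      linear_combination (part1 i x j k) * b x l + (part1 i x k l) * b x j
        + (part1 i x l j) * b x k
  simp only [Finset.sum_add_distrib] at hsum hL ⊢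
  linarith [hsum, hL]
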